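/- Let G be a finite group, H a normal subgroup of G of index p, where p is prime, and let F be a field whose characteristic is zero or does not divide |G|. Let (η, W) be an irreducible F-representation of H such that for every g ∈ G the conjugate representation η^g is isomorphic to η. Then there exist an irreducible F-representation (ρ, V) of G and an integer m with 1 ≤ m ≤ p such that the restriction of ρ to H is isomorphic to the direct sum of m copies of η. -/

import Mathlib

open CategoryTheory

/-- Conjugation by `g` as a monoid homomorphism `H →* H`, for `H` a normal subgroup:
`h ↦ g⁻¹ h g`. -/
def conjIntoHom {G : Type} [Group G] (H : Subgroup G) (hN : H.Normal) (g : G) :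
    ↥H →* ↥H where
  toFun h := ⟨g⁻¹ * ↑h * g, by simpa using hN.conj_mem _ h.2 g⁻¹⟩
  map_one' := by ext; simp
  map_mul' a b := by ext; simp; group

/-- The direct sum of `m` copies of a representation, realized on `Fin m → V`. -/
def repPow {F : Type} [Field F] {H V : Type} [Monoid H] [AddCommGroup V] [Module F V]
    (η : Representation F H V) (m : ℕ) : Representation F H (Fin m → V) where
  toFun h := LinearMap.compLeft (η h) (Fin m)
  map_one' := by ext v i; simp [LinearMap.compLeft]
  map_mul' a b := by ext v i; simp [LinearMap.compLeft]; try rfl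

suppress_compilation

/-! ### Auxiliary lemmas -/

lemma repPow_apply {F : Type} [Field F] {H V : Type} [Monoid H] [AddCommGroup V] [Module F V]
    (η : Representation F H V) (m : ℕ) (h : H) (f : Fin m → V) (i : Fin m) :
    repPow η m h f i = η h (f i) := rfl

section CatSide

variable {F : Type} [Field F] {G : Type} [Monoid G]

lemma fdrep_hom_comm_apply {X Y : FDRep F G} (f : X ⟶ Y) (g : G) (x : X) :
    f.hom (X.ρ g x) = Y.ρ g (f.hom x) := by
  have h := f.comm g
  exact congrArg (fun φ => φ.hom.hom x) h

/-- The subrepresentation on an invariant subspace. -/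
def subRep {X : FDRep F G} (U : Submodule F X) (hU : ∀ (g : G), ∀ x ∈ U, X.ρ g x ∈ U) :
    Representation F G U where
  toFun g := (X.ρ g).restrict (fun x hx => hU g x hx)
  map_one' := by ext x; simp
  map_mul' a b := by ext x; simp

/-- Inclusion as a morphism in `FDRep`. -/
def subRepHom {X : FDRep F G} (U : Submodule F X) (hU : ∀ (g : G), ∀ x ∈ U, X.ρ g x ∈ U) :
    FDRep.of (subRep U hU) ⟶ X where
  hom := ConcreteCategory.ofHom U.subtype
  comm g := by ext x; rfl

lemma mono_of_injective {X Y : FDRep F G} (f : X ⟶ Y) (hf : Function.Injective f.hom) :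
    Mono f := by
  constructor
  intro Z u v huv
  ext z
  have : f.hom (u.hom z) = f.hom (v.hom z) := by
    have := congrArg (fun (w : Z ⟶ Y) => w.hom z) huv
    simpa using this
  exact hf this

lemma hom_injective_of_mono {X Y : FDRep F G} (f : X ⟶ Y) [Mono f] :
    Function.Injective f.hom := by
  rw [← LinearMap.ker_eq_bot]
  by_contra hker
  have hU : ∀ (g : G), ∀ x ∈ LinearMap.ker f.hom.hom.hom, X.ρ g x ∈ LinearMap.ker f.hom.hom.hom := by
    intro g x hx
    simp only [LinearMap.mem_ker] at hx ⊢
    exact (fdrep_hom_comm_apply f g x).trans (by rw [show (ConcreteCategory.hom f.hom) x = 0 from hx, map_zero])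
  set K := LinearMap.ker f.hom.hom.hom
  obtain ⟨x, hxK, hx0⟩ := Submodule.exists_mem_ne_zero_of_ne_bot hker
  have h1 : subRepHom K hU ≫ f = (0 : FDRep.of (subRep K hU) ⟶ Y) := by
    ext z
    exact z.2
  have h2 : subRepHom K hU = 0 := by
    rw [← Limits.zero_comp (f := f)] at h1
    exact (cancel_mono f).mp h1
  have : (⟨x, hxK⟩ : K).1 = 0 := by
    have := congrArg (fun (w : FDRep.of (subRep K hU) ⟶ X) => w.hom ⟨x, hxK⟩) h2
    exact this
  exact hx0 this

lemma isIso_of_bijective {X Y : FDRep F G} (f : X ⟶ Y) (hf : Function.Bijective f.hom) :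
    IsIso f := by
  let e := LinearEquiv.ofBijective f.hom.hom.hom hf
  have he : ∀ x, e x = f.hom x := fun _ => rfl
  refine ⟨⟨⟨(ConcreteCategory.ofHom e.symm.toLinearMap : Y.V ⟶ X.V), fun g => ?_⟩, ?_, ?_⟩⟩
  · ext y
    show e.symm (Y.ρ g y) = X.ρ g (e.symm y)
    apply e.injective
    rw [e.apply_symm_apply, he, fdrep_hom_comm_apply, ← he, e.apply_symm_apply]
  · ext x
    show e.symm (f.hom x) = x
    rw [← he, e.symm_apply_apply]
  · ext y
    show f.hom (e.symm y) = y
    rw [← he, e.apply_symm_apply]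

lemma simple_iff_invariants (X : FDRep F G) :
    Simple X ↔ Nontrivial X ∧
      ∀ U : Submodule F X, (∀ g : G, ∀ x ∈ U, X.ρ g x ∈ U) → U = ⊥ ∨ U = ⊤ := by
  constructor
  · intro hX
    constructor
    · by_contra hns
      rw [not_nontrivial_iff_subsingleton] at hns
      apply id_nonzero X
      ext x
      exact hns.elim _ _
    · intro U hU
      rcases eq_or_ne U ⊥ with h | h
      · exact Or.inl h
      refine Or.inr ?_
      have : Mono (subRepHom U hU) := mono_of_injective _ Subtype.val_injective
      have hne : subRepHom U hU ≠ 0 := by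
        obtain ⟨x, hxU, hx0⟩ := Submodule.exists_mem_ne_zero_of_ne_bot h
        intro h0
        apply hx0
        have := congrArg (fun (w : FDRep.of (subRep U hU) ⟶ X) => w.hom ⟨x, hxU⟩) h0
        exact this
      have : IsIso (subRepHom U hU) := (hX.mono_isIso_iff_nonzero _).mpr hne
      rw [eq_top_iff]
      intro x _
      obtain ⟨i, hi1, hi2⟩ := this.out
      have := congrArg (fun (w : X ⟶ X) => w.hom x) hi2
      simp only [Action.comp_hom, Action.id_hom] at this
      have hx : (subRepHom U hU).hom (i.hom x) = x := this
      rw [← hx]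
      exact ((i.hom x) : U).2
  · rintro ⟨hnt, hinv⟩
    refine ⟨fun {Y} f hf => ?_⟩
    constructor
    · intro hiso h0
      obtain ⟨i, hi1, hi2⟩ := hiso
      have : (𝟙 X : X ⟶ X) = 0 := by rw [← hi2, h0]; simp
      obtain ⟨x, y, hxy⟩ := hnt
      apply hxy
      have hx := congrArg (fun (w : X ⟶ X) => w.hom x) this
      have hy := congrArg (fun (w : X ⟶ X) => w.hom y) this
      simp only [Action.id_hom, Action.zero_hom] at hx hy
      change x = 0 at hx
      change y = 0 at hy
      rw [hx, hy]
    · intro hne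
      haveI := hf
      have hinj : Function.Injective f.hom := hom_injective_of_mono f
      have hUr : ∀ g : G, ∀ x ∈ LinearMap.range f.hom.hom.hom, X.ρ g x ∈ LinearMap.range f.hom.hom.hom := by
        rintro g x ⟨y, rfl⟩
        exact ⟨Y.ρ g y, fdrep_hom_comm_apply f g y⟩
      rcases hinv _ hUr with h | h
      · exfalso
        apply hne
        ext y
        have : f.hom y ∈ LinearMap.range f.hom.hom.hom := ⟨y, rfl⟩
        rw [h, Submodule.mem_bot] at this
        exact this
      · exact isIso_of_bijective f ⟨hinj, LinearMap.range_eq_top.mp h⟩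

end CatSide

section ModuleSide

variable {F : Type} [Field F] {G : Type} [Monoid G]
variable {X : Type} [AddCommGroup X] [Module F X] [Module (MonoidAlgebra F G) X]
  [IsScalarTower F (MonoidAlgebra F G) X]

/-- An `F`-subspace closed under the `G`-action is a `MonoidAlgebra`-submodule. -/
def invariantToSubmodule (U : Submodule F X)
    (hU : ∀ g : G, ∀ x ∈ U, MonoidAlgebra.of F G g • x ∈ U) :
    Submodule (MonoidAlgebra F G) X where
  carrier := U
  add_mem' := U.add_mem
  zero_mem' := U.zero_mem
  smul_mem' := by
    intro a x hx
    refine MonoidAlgebra.induction_on (motive := fun a => a • x ∈ U) a (fun g => hU g x hx) ?_ ?_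
    · intro f g hf hg
      rw [add_smul]
      exact U.add_mem hf hg
    · intro r f hf
      rw [smul_assoc]
      exact U.smul_mem r hf

lemma mem_invariantToSubmodule {U : Submodule F X}
    (hU : ∀ g : G, ∀ x ∈ U, MonoidAlgebra.of F G g • x ∈ U) {x : X} :
    x ∈ invariantToSubmodule U hU ↔ x ∈ U := Iff.rfl

lemma isSimpleModule_iff_invariants :
    IsSimpleModule (MonoidAlgebra F G) X ↔ Nontrivial X ∧
      ∀ U : Submodule F X, (∀ g : G, ∀ x ∈ U, MonoidAlgebra.of F G g • x ∈ U) →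
        U = ⊥ ∨ U = ⊤ := by
  constructor
  · intro hs
    refine ⟨IsSimpleModule.nontrivial (MonoidAlgebra F G) X, fun U hU => ?_⟩
    rcases hs.eq_bot_or_eq_top (invariantToSubmodule U hU) with h | h
    · left; ext x
      simpa using (mem_invariantToSubmodule hU).symm.trans (h ▸ Iff.rfl : x ∈ invariantToSubmodule U hU ↔ x ∈ (⊥ : Submodule (MonoidAlgebra F G) X))
    · right; ext x
      simpa using (mem_invariantToSubmodule hU).symm.trans (h ▸ Iff.rfl : x ∈ invariantToSubmodule U hU ↔ x ∈ (⊤ : Submodule (MonoidAlgebra F G) X))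
  · rintro ⟨hnt, hinv⟩
    have : Nontrivial (Submodule (MonoidAlgebra F G) X) := by
      refine ⟨⊥, ⊤, fun h => ?_⟩
      obtain ⟨x, hx⟩ := exists_ne (0 : X)
      have : x ∈ (⊥ : Submodule (MonoidAlgebra F G) X) := h ▸ Submodule.mem_top
      exact hx (Submodule.mem_bot _ |>.mp this)
    refine (isSimpleModule_iff (MonoidAlgebra F G) X).mpr ⟨fun N => ?_⟩
    have hUr : ∀ g : G, ∀ x ∈ N.restrictScalars F, MonoidAlgebra.of F G g • x ∈ N.restrictScalars F := by
      intro g x hx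
      exact N.smul_mem _ hx
    rcases hinv (N.restrictScalars F) hUr with h | h
    · left; ext x
      simp only [Submodule.mem_bot]
      constructor
      · intro hx
        have : x ∈ N.restrictScalars F := hx
        rw [h] at this; simpa using this
      · rintro rfl; exact N.zero_mem
    · right; ext x
      simp only [Submodule.mem_top, iff_true]
      have : x ∈ N.restrictScalars F := by rw [h]; trivial
      exact this

end ModuleSide

section Combined

variable {F : Type} [Field F] {G : Type} [Monoid G]
variable {X : Type} [AddCommGroup X] [Module F X] [Module (MonoidAlgebra F G) X]
  [IsScalarTower F (MonoidAlgebra F G) X] [FiniteDimensional F X]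

lemma simple_fdrep_iff_isSimpleModule (ρ : Representation F G X)
    (hcomp : ∀ (g : G) (x : X), ρ g x = MonoidAlgebra.of F G g • x) :
    Simple (FDRep.of ρ) ↔ IsSimpleModule (MonoidAlgebra F G) X := by
  rw [simple_iff_invariants, isSimpleModule_iff_invariants (G := G)]
  constructor
  · rintro ⟨h1, h2⟩
    refine ⟨h1, fun U hU => h2 U fun g x hx => ?_⟩
    show ρ g x ∈ U
    rw [hcomp]
    exact hU g x hx
  · rintro ⟨h1, h2⟩
    refine ⟨h1, fun U hU => h2 U fun g x hx => ?_⟩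
    rw [← hcomp]
    exact hU g x hx

end Combined

/-- The representation of `G` on a `MonoidAlgebra F G`-module, by `g • ·`. -/
def smulRep (F : Type) [Field F] (G : Type) [Monoid G] (X : Type) [AddCommGroup X]
    [Module F X] [Module (MonoidAlgebra F G) X] [IsScalarTower F (MonoidAlgebra F G) X] :
    Representation F G X where
  toFun g :=
    { toFun := fun x => MonoidAlgebra.of F G g • x
      map_add' := fun x y => smul_add _ x y
      map_smul' := fun r x => by
        simp only [RingHom.id_apply]
        rw [← algebraMap_smul (MonoidAlgebra F G) r x, smul_smul, ← Algebra.commutes,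
          ← smul_smul, algebraMap_smul] }
  map_one' := by
    ext x
    show MonoidAlgebra.of F G 1 • x = x
    rw [map_one, one_smul]
  map_mul' g g' := by
    ext x
    show MonoidAlgebra.of F G (g * g') • x = MonoidAlgebra.of F G g • MonoidAlgebra.of F G g' • x
    rw [map_mul, mul_smul]

section Build

variable {F : Type} [Field F] {HH : Type} [Monoid HH]
variable {W P : Type} [AddCommGroup W] [Module F W] [AddCommGroup P] [Module F P]
variable {ι : Type}

lemma buildIso (ηρ : Representation F HH W) (σ : Representation F HH P)
    (hWinv : ∀ U : Submodule F W, (∀ h : HH, ∀ x ∈ U, ηρ h x ∈ U) → U = ⊥ ∨ U = ⊤)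
    (β : ι → (W →ₗ[F] P))
    (hβequiv : ∀ i (h : HH) (w : W), β i (ηρ h w) = σ h (β i w)) :
    ∀ l : List ι, ∃ m ≤ l.length, ∃ γ : (Fin m → W) →ₗ[F] P,
      Function.Injective γ ∧ (∀ (h : HH) (f : Fin m → W), γ (repPow ηρ m h f) = σ h (γ f)) ∧
      LinearMap.range γ = l.foldr (fun i s => LinearMap.range (β i) ⊔ s) ⊥ := by
  intro l
  induction l with
  | nil =>
      refine ⟨0, le_refl _, 0, fun a b _ => Subsingleton.elim a b, by simp, by simp⟩
  | cons a l ih =>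
      obtain ⟨m, hm, γ, hinj, hequiv, hrange⟩ := ih
      have hSinv : ∀ (h : HH), ∀ x ∈ LinearMap.range γ, σ h x ∈ LinearMap.range γ := by
        rintro h x ⟨f, rfl⟩
        exact ⟨repPow ηρ m h f, hequiv h f⟩
      have hKinv : ∀ (h : HH), ∀ x ∈ Submodule.comap (β a) (LinearMap.range γ),
          ηρ h x ∈ Submodule.comap (β a) (LinearMap.range γ) := by
        intro h x hx
        simp only [Submodule.mem_comap] at hx ⊢
        rw [hβequiv]
        exact hSinv h _ hx
      rcases hWinv _ hKinv with hK | hK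
      · -- K = ⊥ : add a new copy
        refine ⟨m + 1, Nat.succ_le_succ hm,
          { toFun := fun f => β a (f 0) + γ (fun i : Fin m => f i.succ)
            map_add' := by
              intro f g
              show β a ((f + g) 0) + γ (fun i : Fin m => (f + g) i.succ) = _
              have h1 : (f + g) 0 = f 0 + g 0 := rfl
              have h2 : (fun i : Fin m => (f + g) i.succ)
                  = (fun i : Fin m => f i.succ) + (fun i : Fin m => g i.succ) := rfl
              rw [h1, h2, map_add, map_add]
              abel_nf
            map_smul' := by
              intro c f
              show β a ((c • f) 0) + γ (fun i : Fin m => (c • f) i.succ) = _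
              have h1 : (c • f) 0 = c • f 0 := rfl
              have h2 : (fun i : Fin m => (c • f) i.succ)
                  = c • (fun i : Fin m => f i.succ) := rfl
              rw [h1, h2, map_smul, map_smul, ← smul_add]
              rfl }, ?_, ?_, ?_⟩
        · rw [← LinearMap.ker_eq_bot]
          refine LinearMap.ker_eq_bot'.mpr fun f hf => ?_
          have hf' : β a (f 0) + γ (fun i : Fin m => f i.succ) = 0 := hf
          have h0 : f 0 ∈ Submodule.comap (β a) (LinearMap.range γ) := by
            simp only [Submodule.mem_comap]
            rw [eq_neg_of_add_eq_zero_left hf']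
            exact Submodule.neg_mem _ ⟨_, rfl⟩
          rw [hK, Submodule.mem_bot] at h0
          have htail : γ (fun i : Fin m => f i.succ) = 0 := by
            rw [h0, map_zero, zero_add] at hf'; exact hf'
          have htail0 : (fun i : Fin m => f i.succ) = 0 := by
            apply hinj; rw [htail, map_zero]
          funext i
          refine Fin.cases ?_ ?_ i
          · exact h0
          · intro j; exact congrFun htail0 j
        · intro h f
          have heq : (fun i : Fin m => (repPow ηρ (m+1) h f) i.succ)
              = repPow ηρ m h (fun i : Fin m => f i.succ) := rfl
          show β a (repPow ηρ (m+1) h f 0) + γ (fun i : Fin m => (repPow ηρ (m+1) h f) i.succ)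
              = σ h (β a (f 0) + γ (fun i : Fin m => f i.succ))
          rw [heq, map_add, repPow_apply, hβequiv, hequiv]
        · apply le_antisymm
          · rintro x ⟨f, rfl⟩
            exact Submodule.add_mem _ (Submodule.mem_sup_left ⟨f 0, rfl⟩)
              (Submodule.mem_sup_right (hrange ▸ ⟨fun i : Fin m => f i.succ, rfl⟩))
          · refine sup_le ?_ ?_
            · rintro x ⟨w, rfl⟩
              refine ⟨Fin.cons (α := fun _ : Fin (m+1) => W) w 0, ?_⟩
              show β a (Fin.cons (α := fun _ : Fin (m+1) => W) w 0 (0 : Fin (m+1)))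
                  + γ (fun i : Fin m => Fin.cons (α := fun _ : Fin (m+1) => W) w 0 i.succ) = β a w
              have h2 : (fun i : Fin m => Fin.cons (α := fun _ : Fin (m+1) => W) w 0 i.succ) = 0 := by
                funext i; exact Fin.cons_succ _ _ _
              rw [h2, map_zero, add_zero, Fin.cons_zero]
            · rw [← hrange]
              rintro x ⟨f, rfl⟩
              refine ⟨Fin.cons (α := fun _ : Fin (m+1) => W) 0 f, ?_⟩
              show β a (Fin.cons (α := fun _ : Fin (m+1) => W) 0 f (0 : Fin (m+1)))
                  + γ (fun i : Fin m => Fin.cons (α := fun _ : Fin (m+1) => W) 0 f i.succ) = γ f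
              have h2 : (fun i : Fin m => Fin.cons (α := fun _ : Fin (m+1) => W) 0 f i.succ) = f := by
                funext i; exact Fin.cons_succ _ _ _
              rw [h2, Fin.cons_zero, map_zero, zero_add]
      · -- K = ⊤ : β a lands in range γ already
        refine ⟨m, le_trans hm (Nat.le_succ _), γ, hinj, hequiv, ?_⟩
        have hle : LinearMap.range (β a) ≤ LinearMap.range γ := by
          rintro x ⟨w, rfl⟩
          have : w ∈ Submodule.comap (β a) (LinearMap.range γ) := by rw [hK]; trivial
          exact this
        show LinearMap.range γ = LinearMap.range (β a) ⊔ _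
        rw [hrange] at hle ⊢
        exact (sup_eq_right.mpr hle).symm

end Build

set_option maxHeartbeats 2000000 in
theorem stmt_7 (F : Type) [Field F] (G : Type) [Group G] [Fintype G]
    (hchar : ringChar F = 0 ∨ ¬ (ringChar F ∣ Fintype.card G))
    (H : Subgroup G) (hN : H.Normal)
    (p : ℕ) (hp : p.Prime) (hidx : H.index = p)
    (η : FDRep F ↥H) (hη : Simple η)
    (hconj : ∀ g : G,
      Nonempty ((Action.res (FGModuleCat F) (conjIntoHom H hN g)).obj η ≅ η)) :
    ∃ (ρ : FDRep F G) (m : ℕ), Simple ρ ∧ 1 ≤ m ∧ m ≤ p ∧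
      Nonempty ((Action.res (FGModuleCat F) H.subtype).obj ρ ≅
        FDRep.of (repPow η.ρ m)) := by
  classical
  -- characteristic conditions
  have hcardG : (Fintype.card G : F) ≠ 0 := by
    intro h
    have hdvd := (CharP.cast_eq_zero_iff F (ringChar F) _).mp h
    rcases hchar with h0 | hnd
    · rw [h0] at hdvd
      exact Fintype.card_ne_zero (α := G) (zero_dvd_iff.mp hdvd)
    · exact hnd hdvd
  haveI : NeZero ((Fintype.card G : F)) := ⟨hcardG⟩
  haveI : Fintype ↥H := Fintype.ofFinite _
  have hcardH : (Fintype.card ↥H : F) ≠ 0 := by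
    obtain ⟨k, hk⟩ : Fintype.card ↥H ∣ Fintype.card G := by
      have := Subgroup.card_subgroup_dvd_card H
      simpa [Nat.card_eq_fintype_card] using this
    intro h
    apply hcardG
    rw [hk, Nat.cast_mul, h, zero_mul]
  haveI : NeZero ((Fintype.card ↥H : F)) := ⟨hcardH⟩
  haveI : NeZero ((Nat.card ↥H : F)) := ⟨by rw [Nat.card_eq_fintype_card]; exact hcardH⟩
  haveI : NeZero ((Nat.card G : F)) := ⟨by rw [Nat.card_eq_fintype_card]; exact hcardG⟩
  -- the module structure on `η` over `MonoidAlgebra F ↥H`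
  letI : Module (MonoidAlgebra F ↥H) η := Module.compHom _ (Representation.asAlgebraHom η.ρ).toRingHom
  have hsmulW : ∀ (b : MonoidAlgebra F ↥H) (w : η), b • w = Representation.asAlgebraHom η.ρ b w := fun _ _ => rfl
  have hcompW : ∀ (h : ↥H) (w : η), η.ρ h w = MonoidAlgebra.of F ↥H h • w := by
    intro h w
    rw [hsmulW, MonoidAlgebra.of_apply, Representation.asAlgebraHom_single, one_smul]
  letI : IsScalarTower F (MonoidAlgebra F ↥H) η := ⟨fun r b w => by
    rw [hsmulW, hsmulW, map_smul]; rfl⟩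
  obtain ⟨hWnt, hWinv⟩ := (simple_iff_invariants η).mp hη
  haveI hsimpleW : IsSimpleModule (MonoidAlgebra F ↥H) η :=
    (isSimpleModule_iff_invariants (G := ↥H)).mpr
      ⟨hWnt, fun U hU => hWinv U (fun h x hx => by rw [hcompW]; exact hU h x hx)⟩
  haveI := hWnt
  obtain ⟨w0, hw0⟩ := exists_ne (0 : η)
  -- embed η into the group algebra of H
  have hsurj0 : Function.Surjective (LinearMap.toSpanSingleton (MonoidAlgebra F ↥H) η w0) :=
    IsSimpleModule.toSpanSingleton_surjective _ hw0
  set f0 := LinearMap.toSpanSingleton (MonoidAlgebra F ↥H) η w0 with hf0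
  obtain ⟨C, hC⟩ := MonoidAlgebra.Submodule.exists_isCompl (LinearMap.ker f0)
  have hbij0 : Function.Bijective (f0.comp C.subtype) := by
    constructor
    · intro x y hxy
      have hsub : ((x : MonoidAlgebra F ↥H) - y) ∈ LinearMap.ker f0 := by
        simp only [LinearMap.mem_ker, map_sub]
        rw [sub_eq_zero]
        exact hxy
      have hsubC : ((x : MonoidAlgebra F ↥H) - y) ∈ C := C.sub_mem x.2 y.2
      have := Submodule.disjoint_def.mp hC.disjoint _ hsub hsubC
      exact Subtype.ext (sub_eq_zero.mp this)
    · intro w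
      obtain ⟨b, hb⟩ := hsurj0 w
      have hbmem : b ∈ LinearMap.ker f0 ⊔ C := by rw [hC.sup_eq_top]; trivial
      obtain ⟨k, hk, c, hcmem, hkc⟩ := Submodule.mem_sup.mp hbmem
      refine ⟨⟨c, hcmem⟩, ?_⟩
      show f0 c = w
      have : f0 b = w := hb
      rw [← hkc, map_add] at this
      simpa [LinearMap.mem_ker.mp hk] using this
  set eC := LinearEquiv.ofBijective (f0.comp C.subtype) hbij0 with heC
  set ψ : η →ₗ[MonoidAlgebra F ↥H] MonoidAlgebra F ↥H :=
    C.subtype.comp eC.symm.toLinearMap with hψ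
  have hψw0 : ψ w0 ≠ 0 := by
    intro h
    apply hw0
    have h1 : ((eC.symm w0 : C) : MonoidAlgebra F ↥H) = 0 := h
    have h2 : eC.symm w0 = 0 := Subtype.ext h1
    rw [← eC.apply_symm_apply w0, h2, map_zero]
  -- the ring hom from the group algebra of H to that of G
  set φ : MonoidAlgebra F ↥H →+* MonoidAlgebra F G := MonoidAlgebra.mapDomainRingHom F H.subtype
    with hφdef
  have hφ : ∀ b, φ b = MonoidAlgebra.mapDomain (H.subtype) b := fun _ => rfl
  have hφinj : Function.Injective φ := by
    intro x y hxy
    rw [hφ, hφ] at hxy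
    exact MonoidAlgebra.mapDomain_injective Subtype.val_injective hxy
  have hφsingle : ∀ (h : ↥H) (r : F),
      φ (MonoidAlgebra.single h r) = MonoidAlgebra.single (↑h : G) r := by
    intro h r
    rw [hφ]
    exact MonoidAlgebra.mapDomain_single
  letI : Module (MonoidAlgebra F ↥H) (MonoidAlgebra F G) := Module.compHom _ φ
  have hsmulBA : ∀ (b : MonoidAlgebra F ↥H) (a : MonoidAlgebra F G), b • a = φ b * a :=
    fun _ _ => rfl
  set ψA : η →ₗ[MonoidAlgebra F ↥H] MonoidAlgebra F G :=
    { toFun := fun w => φ (ψ w)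
      map_add' := fun x y => by
        show φ (ψ (x + y)) = φ (ψ x) + φ (ψ y)
        rw [map_add, map_add]
      map_smul' := fun b w => by
        show φ (ψ (b • w)) = b • φ (ψ w)
        rw [ψ.map_smul, hsmulBA]
        show φ (b * ψ w) = _
        rw [map_mul] } with hψA
  set a0 : MonoidAlgebra F G := φ (ψ w0) with ha0def
  have ha0 : a0 ≠ 0 := fun h => hψw0 (hφinj (by show φ (ψ w0) = φ 0; rw [map_zero]; exact h))
  -- find a simple submodule of the group algebra of G receiving a nonzero map from η
  have hSAne : Submodule.span (MonoidAlgebra F G) {a0} ≠ ⊥ := by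
    simp [Submodule.span_singleton_eq_bot, ha0]
  rcases IsSemisimpleModule.eq_bot_or_exists_simple_le
      (Submodule.span (MonoidAlgebra F G) {a0}) with h | ⟨P, hPle, hPsimple⟩
  · exact absurd h hSAne
  haveI : IsSimpleModule (MonoidAlgebra F G) ↥P := hPsimple
  obtain ⟨C', hC'⟩ := MonoidAlgebra.Submodule.exists_isCompl P
  set π := P.linearProjOfIsCompl C' hC' with hπdef
  have hπa0 : π a0 ≠ 0 := by
    intro h
    have ha0C : a0 ∈ C' := (Submodule.linearProjOfIsCompl_apply_eq_zero_iff hC').mp h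
    have hspan : Submodule.span (MonoidAlgebra F G) {a0} ≤ C' :=
      Submodule.span_le.mpr (Set.singleton_subset_iff.mpr ha0C)
    have hPbot : P = ⊥ := hC'.disjoint.eq_bot_of_le (le_trans hPle hspan)
    exact (IsSimpleModule.isAtom (m := P)).1 hPbot
  letI : Module (MonoidAlgebra F ↥H) ↥P := Module.compHom _ φ
  have hsmulBP : ∀ (b : MonoidAlgebra F ↥H) (x : ↥P), b • x = φ b • x := fun _ _ => rfl
  set θB : η →ₗ[MonoidAlgebra F ↥H] ↥P :=
    { toFun := fun w => π (ψA w)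
      map_add' := fun x y => by
        show π (ψA (x + y)) = π (ψA x) + π (ψA y)
        rw [map_add, map_add]
      map_smul' := fun b w => by
        show π (ψA (b • w)) = b • π (ψA w)
        rw [ψA.map_smul]
        show π (φ b • ψA w) = _
        rw [π.map_smul, hsmulBP] } with hθBdef
  have hθB0 : θB w0 ≠ 0 := hπa0
  have hθBinj : Function.Injective θB :=
    LinearMap.injective_of_ne_zero (fun h => hθB0 (by rw [h]; rfl))
  -- F-module structure data on ↥P
  haveI : Module.Finite F (MonoidAlgebra F G) :=
    Module.Finite.equiv ((Finsupp.linearEquivFunOnFinite F F G).symm.trans (MonoidAlgebra.coeffLinearEquiv F).symm)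
  haveI : FiniteDimensional F ↥P :=
    FiniteDimensional.of_injective ((P.subtype).restrictScalars F) Subtype.val_injective
  letI : IsScalarTower F (MonoidAlgebra F ↥H) ↥P := ⟨fun r b x => by
    rw [hsmulBP, hsmulBP]
    have hφs : φ (r • b) = r • φ b := by
      rw [hφ, hφ, MonoidAlgebra.mapDomain_smul]
    rw [hφs, smul_assoc]⟩
  set θ : η →ₗ[F] ↥P := θB.restrictScalars F with hθdef
  have hθcoe : ∀ w, θ w = θB w := fun _ => rfl
  -- the representation of G on ↥P
  set ρP : Representation F G ↥P := smulRep F G ↥P with hρPdef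
  have hρPapply : ∀ (g : G) (x : ↥P), ρP g x = MonoidAlgebra.of F G g • x := fun _ _ => rfl
  set ρ : FDRep F G := FDRep.of ρP with hρdef
  haveI hρsimple : Simple ρ := (simple_fdrep_iff_isSimpleModule ρP hρPapply).mpr hPsimple
  -- equivariance of θ
  have hθequiv : ∀ (h : ↥H) (w : η), θ (η.ρ h w) = MonoidAlgebra.of F G (↑h : G) • θ w := by
    intro h w
    rw [hθcoe, hθcoe, hcompW, θB.map_smul, hsmulBP]
    congr 1
    rw [MonoidAlgebra.of_apply, hφsingle]
    rfl
  -- conjugation data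
  have hconjdata : ∀ g : G, ∃ d : (η : Type) →ₗ[F] η, Function.Bijective d ∧
      ∀ (h : ↥H) (w : η), d (η.ρ h w) = η.ρ (conjIntoHom H hN g h) (d w) := by
    intro g
    obtain ⟨i⟩ := hconj g
    refine ⟨i.inv.hom.hom.hom, ⟨?_, ?_⟩, ?_⟩
    · have hli : ∀ x, i.hom.hom (i.inv.hom x) = x := by
        intro x
        have h1 := congrArg (fun (w : η ⟶ η) => w.hom x) i.inv_hom_id
        simp only [Action.comp_hom, Action.id_hom] at h1
        exact h1
      intro x y hxy
      exact (hli x).symm.trans ((congrArg _ hxy).trans (hli y))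
    · intro x
      refine ⟨i.hom.hom x, ?_⟩
      have h1 := congrArg
        (fun (w : (Action.res (FGModuleCat F) (conjIntoHom H hN g)).obj η ⟶
          (Action.res (FGModuleCat F) (conjIntoHom H hN g)).obj η) => w.hom x)
        i.hom_inv_id
      simp only [Action.comp_hom, Action.id_hom] at h1
      exact h1
    · intro h w
      exact fdrep_hom_comm_apply (X := η)
        (Y := (Action.res (FGModuleCat F) (conjIntoHom H hN g)).obj η) i.inv h w
  choose d hdbij hdequiv using hconjdata
  -- the maps β g : η → P
  set β : G → ((η : Type) →ₗ[F] ↥P) := fun g => ((ρP g).comp θ).comp (d g) with hβdef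
  have hρPcancel : ∀ (g : G) (x : ↥P), ρP g⁻¹ (ρP g x) = x := by
    intro g x
    rw [hρPapply, hρPapply, smul_smul, ← map_mul, inv_mul_cancel, map_one, one_smul]
  have hρPinj : ∀ g : G, Function.Injective (ρP g) := by
    intro g x y hxy
    rw [← hρPcancel g x, ← hρPcancel g y, hxy]
  have hβinj : ∀ g, Function.Injective (β g) := by
    intro g x y hxy
    have h1 : θ (d g x) = θ (d g y) := hρPinj g hxy
    have h2 : d g x = d g y := hθBinj h1
    exact (hdbij g).injective h2
  set σ : Representation F ↥H ↥P := ρP.comp H.subtype with hσdef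
  have hσapply : ∀ (h : ↥H) (x : ↥P), σ h x = MonoidAlgebra.of F G (↑h : G) • x :=
    fun _ _ => rfl
  have hβequiv : ∀ (g : G) (h : ↥H) (w : η), β g (η.ρ h w) = σ h (β g w) := by
    intro g h w
    show ρP g (θ (d g (η.ρ h w))) = σ h (ρP g (θ (d g w)))
    rw [hdequiv, hθequiv, hσapply]
    have hcoe : ((conjIntoHom H hN g h : ↥H) : G) = g⁻¹ * ↑h * g := rfl
    rw [hρPapply, hρPapply, hcoe, smul_smul, smul_smul, ← map_mul, ← map_mul]
    congr 2
    group
  -- the subspaces U g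
  set Ug : G → Submodule F ↥P := fun g => (LinearMap.range θ).map (ρP g) with hUgdef
  have hβrange : ∀ g, LinearMap.range (β g) = Ug g := by
    intro g
    show LinearMap.range (((ρP g).comp θ).comp (d g)) = _
    rw [LinearMap.range_comp, LinearMap.range_eq_top.mpr (hdbij g).surjective,
      Submodule.map_top, LinearMap.range_comp]
  have hUmul : ∀ (g' g : G), ∀ x ∈ Ug g, MonoidAlgebra.of F G g' • x ∈ Ug (g' * g) := by
    intro g' g x hx
    obtain ⟨y, hy, rfl⟩ := Submodule.mem_map.mp hx
    refine Submodule.mem_map.mpr ⟨y, hy, ?_⟩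
    rw [hρPapply, hρPapply, smul_smul, ← map_mul]
  have hUh : ∀ (g : G) (h : ↥H), Ug (g * ↑h) = Ug g := by
    intro g h
    have hmapθ : (LinearMap.range θ).map (ρP (↑h : G)) = LinearMap.range θ := by
      apply le_antisymm
      · rintro x hx
        obtain ⟨y, ⟨w, rfl⟩, rfl⟩ := Submodule.mem_map.mp hx
        refine ⟨η.ρ h w, ?_⟩
        rw [hθequiv, hρPapply]
      · rintro x ⟨w, rfl⟩
        refine Submodule.mem_map.mpr ⟨θ (η.ρ h⁻¹ w), ⟨η.ρ h⁻¹ w, rfl⟩, ?_⟩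
        rw [hθequiv, hρPapply, smul_smul, ← map_mul]
        have : (↑h : G) * (↑(h⁻¹) : G) = 1 := by
          rw [← Subgroup.coe_mul, mul_inv_cancel, Subgroup.coe_one]
        rw [this, map_one, one_smul]
    have hcomp : ∀ x, ρP (g * ↑h) x = ρP g (ρP (↑h : G) x) := by
      intro x
      rw [hρPapply, hρPapply, hρPapply, smul_smul, ← map_mul]
    show (LinearMap.range θ).map (ρP (g * ↑h)) = (LinearMap.range θ).map (ρP g)
    conv_rhs => rw [← hmapθ]
    apply le_antisymm
    · rintro x hx
      obtain ⟨y, hy, rfl⟩ := Submodule.mem_map.mp hx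
      exact Submodule.mem_map.mpr
        ⟨ρP (↑h : G) y, Submodule.mem_map.mpr ⟨y, hy, rfl⟩, (hcomp y).symm⟩
    · rintro x hx
      obtain ⟨z, hz, rfl⟩ := Submodule.mem_map.mp hx
      obtain ⟨y, hy, rfl⟩ := Submodule.mem_map.mp hz
      exact Submodule.mem_map.mpr ⟨y, hy, hcomp y⟩
  have hUne : ∀ g, Ug g ≠ ⊥ := by
    intro g hbot
    have hmem : ρP g (θ w0) ∈ Ug g := Submodule.mem_map.mpr ⟨θ w0, ⟨w0, rfl⟩, rfl⟩
    rw [hbot, Submodule.mem_bot] at hmem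
    have : θ w0 = 0 := hρPinj g (by rw [hmem, map_zero])
    exact hθB0 this
  -- the coset representatives
  haveI : Fintype (G ⧸ H) := Fintype.ofFinite _
  set L : List G := ((Finset.univ : Finset (G ⧸ H)).toList).map Quotient.out with hLdef
  have hLlen : L.length = p := by
    rw [hLdef, List.length_map, Finset.length_toList, Finset.card_univ]
    rw [← hidx, Subgroup.index_eq_card, Nat.card_eq_fintype_card]
    exact Fintype.card_congr (Equiv.refl _)
  have hcover : ∀ g : G, ∃ g' ∈ L, Ug g = Ug g' := by
    intro g
    refine ⟨(QuotientGroup.mk g : G ⧸ H).out, ?_, ?_⟩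
    · rw [hLdef]
      exact List.mem_map.mpr ⟨_, Finset.mem_toList.mpr (Finset.mem_univ _), rfl⟩
    · obtain ⟨h, hh⟩ := QuotientGroup.mk_out_eq_mul H g
      rw [hh, hUh]
  -- the sum of all the U g for g in L is everything
  set T : Submodule F ↥P := L.foldr (fun g s => Ug g ⊔ s) ⊥ with hTdef
  have hmemfold : ∀ {l : List G} {g : G}, g ∈ l → Ug g ≤ l.foldr (fun g s => Ug g ⊔ s) ⊥ := by
    intro l
    induction l with
    | nil => intro g h; simp at h
    | cons a l ih =>
        intro g hg
        rcases List.mem_cons.mp hg with rfl | hg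
        · exact le_sup_left
        · exact le_trans (ih hg) le_sup_right
  have hTinv : ∀ (g' : G), ∀ x ∈ T, MonoidAlgebra.of F G g' • x ∈ T := by
    intro g'
    have key : ∀ l : List G, ∀ x ∈ l.foldr (fun g s => Ug g ⊔ s) ⊥,
        MonoidAlgebra.of F G g' • x ∈ T := by
      intro l
      induction l with
      | nil =>
          intro x hx
          rw [List.foldr_nil, Submodule.mem_bot] at hx
          rw [hx, smul_zero]
          exact T.zero_mem
      | cons a l ih =>
          intro x hx
          rw [List.foldr_cons] at hx
          obtain ⟨u, hu, y, hy, rfl⟩ := Submodule.mem_sup.mp hx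
          rw [smul_add]
          refine T.add_mem ?_ (ih y hy)
          have h1 : MonoidAlgebra.of F G g' • u ∈ Ug (g' * a) := hUmul g' a u hu
          obtain ⟨g'', hg''L, heq⟩ := hcover (g' * a)
          rw [heq] at h1
          exact hmemfold hg''L h1
    exact key L
  have hTtop : T = ⊤ := by
    set N := invariantToSubmodule T hTinv with hNdef
    rcases hPsimple.eq_bot_or_eq_top N with h | h
    · exfalso
      have hLne : L ≠ [] := by
        intro h0
        rw [h0] at hLlen
        exact hp.ne_zero hLlen.symm
      obtain ⟨g0, hg0⟩ := List.exists_mem_of_ne_nil L hLne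
      obtain ⟨x, hx, hx0⟩ := Submodule.exists_mem_ne_zero_of_ne_bot (hUne g0)
      have hxT : x ∈ T := hmemfold hg0 hx
      have hxN : x ∈ N := hxT
      rw [h] at hxN
      exact hx0 (Submodule.mem_bot _ |>.mp hxN)
    · ext x
      simp only [Submodule.mem_top, iff_true]
      have : x ∈ N := by rw [h]; trivial
      exact this
  -- build the isomorphism
  obtain ⟨m, hmle, γ, hγinj, hγequiv, hγrange⟩ :=
    buildIso η.ρ σ hWinv β hβequiv L
  have hfoldeq : L.foldr (fun g s => LinearMap.range (β g) ⊔ s) ⊥ = T := by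
    rw [hTdef]
    induction L with
    | nil => rfl
    | cons a l ih => rw [List.foldr_cons, List.foldr_cons, hβrange, ih]
  rw [hfoldeq, hTtop] at hγrange
  have hm1 : 1 ≤ m := by
    rcases Nat.eq_zero_or_pos m with hm0 | hm
    · exfalso
      subst hm0
      haveI := IsSimpleModule.nontrivial (MonoidAlgebra F G) ↥P
      obtain ⟨x, hx⟩ := exists_ne (0 : ↥P)
      obtain ⟨f, hf⟩ := LinearMap.mem_range.mp (hγrange ▸ Submodule.mem_top (x := x))
      apply hx
      rw [← hf, Subsingleton.elim f 0, map_zero]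
    · exact hm
  refine ⟨ρ, m, hρsimple, hm1, hLlen ▸ hmle, ?_⟩
  have hγbij : Function.Bijective γ := ⟨hγinj, LinearMap.range_eq_top.mp hγrange⟩
  set e := LinearEquiv.ofBijective γ hγbij with hedef
  refine ⟨(Action.mkIso (M := FDRep.of (repPow η.ρ m))
    (N := (Action.res (FGModuleCat F) H.subtype).obj ρ)
    (LinearEquiv.toFGModuleCatIso (V := Fin m → (η : Type)) (W := ↥P) e) ?_).symm⟩
  intro h
  apply FGModuleCat.hom_ext; apply LinearMap.ext; intro x
  simp only [comp_apply]
  show γ ((repPow η.ρ m) h x) = σ h (γ x)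
  exact hγequiv h x
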